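/- Suppose the curve C is defined over ℝ, i.e., I is generated by real polynomials. Let v ∈ (ℝ*)^{n+1} satisfy the patch condition for J, and set Î = J + ⟨v_0 x_0 + … + v_n x_n − 1⟩. Let K = ℝ((t)). Then for every nonzero u ∈ ℤ^n the following are equivalent: (a) there exists z ∈ (K*)^n with f(z) = 0 for all real f ∈ I and −val(z_i) = u_i for all i = 1,…,n; (b) there exists y ∈ (K*)^{n+1} with f(y) = 0 for all real f ∈ Î, val(y_i) ≥ 0 for all i = 0,…,n, and u_i = val(y_0) − val(y_i) for all i = 1,…,n. -/

import Mathlib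

open MvPolynomial
open scoped Classical

noncomputable section

/-- `v` satisfies the patch condition for a homogeneous ideal `J ⊆ ℂ[x₀,…,xₙ]`:
every nonzero common zero of `J` having some zero coordinate satisfies `v · a ≠ 0`. -/
def PatchCond {n : ℕ} (J : Ideal (MvPolynomial (Fin (n + 1)) ℂ)) (v : Fin (n + 1) → ℂ) : Prop :=
  ∀ a : Fin (n + 1) → ℂ, a ≠ 0 → (∀ g ∈ J, eval a g = 0) → (∃ i, a i = 0) →
    ∑ i, v i * a i ≠ 0

/-- The homogeneous vanishing ideal of the projective closure of the affine variety of `I`: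
the ideal generated by all homogeneous `F` with dehomogenization `F(1,x₁,…,xₙ) ∈ I`. -/
def projClosureIdeal {n : ℕ} (I : Ideal (MvPolynomial (Fin n) ℂ)) :
    Ideal (MvPolynomial (Fin (n + 1)) ℂ) :=
  Ideal.span {F | (∃ d, F.IsHomogeneous d) ∧
    aeval (Fin.cons (1 : MvPolynomial (Fin n) ℂ) X) F ∈ I}

/-! ### Auxiliary lemmas on Laurent series -/

namespace TropAux

open HahnSeries

lemma algLS {F : Type*} [Field F] (c : F) :
    algebraMap F (LaurentSeries F) c = HahnSeries.C c := by
  rw [HahnSeries.algebraMap_apply', PowerSeries.algebraMap_apply, HahnSeries.ofPowerSeries_C]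
  simp

/-- coefficientwise complexification of real Laurent series, as a ring hom. -/
def lmap : LaurentSeries ℝ →+* LaurentSeries ℂ where
  toFun x := x.map (algebraMap ℝ ℂ)
  map_zero' := by ext; simp
  map_one' := by ext k; simp [HahnSeries.coeff_one]
  map_add' x y := by ext k; simp
  map_mul' x y := HahnSeries.map_mul (algebraMap ℝ ℂ).toNonUnitalRingHom

@[simp] lemma lmap_coeff (x : LaurentSeries ℝ) (k : ℤ) :
    (lmap x).coeff k = algebraMap ℝ ℂ (x.coeff k) := rfl

lemma lmap_injective : Function.Injective lmap := by
  intro x y h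
  ext k
  have h2 := congrArg (fun w => HahnSeries.coeff w k) h
  simp only [lmap_coeff] at h2
  exact_mod_cast h2

lemma lmap_single (a : ℤ) (r : ℝ) : lmap (single a r) = single a (algebraMap ℝ ℂ r) := by
  ext k
  by_cases h : k = a <;> simp [h, HahnSeries.coeff_single]

lemma lmap_algebraMap (r : ℝ) :
    lmap (algebraMap ℝ (LaurentSeries ℝ) r) = algebraMap ℂ (LaurentSeries ℂ) (algebraMap ℝ ℂ r) := by
  rw [algLS, algLS, HahnSeries.C_apply, HahnSeries.C_apply, lmap_single]

lemma ringHomCompat :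
    (algebraMap ℂ (LaurentSeries ℂ)).comp (algebraMap ℝ ℂ)
      = lmap.comp (algebraMap ℝ (LaurentSeries ℝ)) :=
  RingHom.ext fun r => (lmap_algebraMap r).symm

lemma lmap_aeval {m : ℕ} (z : Fin m → LaurentSeries ℝ) (g : MvPolynomial (Fin m) ℝ) :
    aeval (fun i => lmap (z i)) (MvPolynomial.map (algebraMap ℝ ℂ) g) = lmap (aeval z g) := by
  rw [aeval_def, eval₂_map, aeval_def, eval₂_comp_left lmap, ← ringHomCompat]
  rfl

/-- coefficient of a product at a negative index vanishes for nonneg-supported series -/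
lemma mul_coeff_neg {x y : LaurentSeries ℂ}
    (hx : ∀ k : ℤ, k < 0 → x.coeff k = 0) (hy : ∀ k : ℤ, k < 0 → y.coeff k = 0)
    {k : ℤ} (hk : k < 0) : (x * y).coeff k = 0 := by
  rw [HahnSeries.coeff_mul]
  apply Finset.sum_eq_zero
  rintro ⟨i, j⟩ hij
  rw [Finset.mem_addAntidiagonal] at hij
  obtain ⟨hi, hj, hsum⟩ := hij
  exfalso
  have h1 : (0 : ℤ) ≤ i := le_of_not_gt fun h => hi (hx i h)
  have h2 : (0 : ℤ) ≤ j := le_of_not_gt fun h => hj (hy j h)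
  omega

lemma mul_coeff_zero {x y : LaurentSeries ℂ}
    (hx : ∀ k : ℤ, k < 0 → x.coeff k = 0) (hy : ∀ k : ℤ, k < 0 → y.coeff k = 0) :
    (x * y).coeff 0 = x.coeff 0 * y.coeff 0 := by
  rw [HahnSeries.coeff_mul]
  rw [Finset.sum_eq_single ((0 : ℤ), (0 : ℤ))]
  · intro b hb hb0
    exfalso
    rw [Finset.mem_addAntidiagonal] at hb
    obtain ⟨hi, hj, hsum⟩ := hb
    have h1 : (0 : ℤ) ≤ b.1 := le_of_not_gt fun h => hi (hx _ h)
    have h2 : (0 : ℤ) ≤ b.2 := le_of_not_gt fun h => hj (hy _ h)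
    apply hb0
    have : b.1 = 0 ∧ b.2 = 0 := by omega
    exact Prod.ext this.1 this.2
  · intro h
    rw [Finset.mem_addAntidiagonal] at h
    push_neg at h
    by_cases h1 : x.coeff 0 = 0
    · rw [h1, zero_mul]
    by_cases h2 : y.coeff 0 = 0
    · rw [h2, mul_zero]
    exact absurd (h h1 h2) (by simp)

/-- evaluation of a polynomial at nonneg-supported Laurent series: coefficient extraction -/
lemma aeval_coeff {m : ℕ} (W : Fin m → LaurentSeries ℂ)
    (hW : ∀ i, ∀ k : ℤ, k < 0 → (W i).coeff k = 0) (g : MvPolynomial (Fin m) ℂ) :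
    (∀ k : ℤ, k < 0 → (aeval W g).coeff k = 0) ∧
      (aeval W g).coeff 0 = eval (fun i => (W i).coeff 0) g := by
  induction g using MvPolynomial.induction_on with
  | C c =>
      rw [aeval_C, eval_C, algLS, HahnSeries.C_apply]
      constructor
      · intro k hk
        rw [HahnSeries.coeff_single]
        simp [hk.ne]
      · rw [HahnSeries.coeff_single_same]
  | add p q hp hq =>
      rw [map_add, map_add]
      constructor
      · intro k hk
        rw [HahnSeries.coeff_add, hp.1 k hk, hq.1 k hk, add_zero]
      · rw [HahnSeries.coeff_add, hp.2, hq.2]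
  | mul_X p i hp =>
      rw [map_mul, map_mul, aeval_X, eval_X]
      constructor
      · intro k hk
        exact mul_coeff_neg hp.1 (hW i) hk
      · rw [mul_coeff_zero hp.1 (hW i), hp.2]

end TropAux

/-! ### Homogenization -/

namespace TropAux

variable {R : Type*} [CommRing R]

/-- naive homogenization with a new variable in position `0` -/
def homog {n : ℕ} (d : ℕ) (g : MvPolynomial (Fin n) R) : MvPolynomial (Fin (n + 1)) R :=
  ∑ μ ∈ g.support, monomial (Finsupp.cons (d - ∑ i, μ i) μ) (coeff μ g)

lemma degree_eq_univ_sum {n : ℕ} (μ : Fin n →₀ ℕ) : Finsupp.degree μ = ∑ i, μ i :=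
  Finset.sum_subset (Finset.subset_univ _) fun i _ h => Finsupp.notMem_support_iff.mp h

lemma degree_cons {n : ℕ} (a : ℕ) (μ : Fin n →₀ ℕ) :
    Finsupp.degree (Finsupp.cons a μ) = a + ∑ i, μ i := by
  rw [degree_eq_univ_sum, Fin.sum_univ_succ]
  simp [Finsupp.cons_zero, Finsupp.cons_succ]

lemma homog_isHomogeneous {n : ℕ} {d : ℕ} {g : MvPolynomial (Fin n) R}
    (hd : ∀ μ ∈ g.support, (∑ i, μ i) ≤ d) : (homog d g).IsHomogeneous d := by
  apply IsHomogeneous.sum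
  intro μ hμ
  apply isHomogeneous_monomial
  rw [degree_cons]
  have := hd μ hμ
  omega

lemma map_homog {n : ℕ} {S : Type*} [CommRing S] (f : R →+* S) (hf : Function.Injective f)
    (d : ℕ) (g : MvPolynomial (Fin n) R) :
    MvPolynomial.map f (homog d g) = homog d (MvPolynomial.map f g) := by
  unfold homog
  rw [map_sum, MvPolynomial.support_map_of_injective _ hf]
  apply Finset.sum_congr rfl
  intro μ hμ
  rw [map_monomial, coeff_map]

lemma aeval_cons_one_homog {n : ℕ} (d : ℕ) (g : MvPolynomial (Fin n) R) :
    aeval (Fin.cons (1 : MvPolynomial (Fin n) R) X) (homog d g) = g := by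
  unfold homog
  rw [map_sum]
  conv_rhs => rw [← support_sum_monomial_coeff g]
  apply Finset.sum_congr rfl
  intro μ hμ
  rw [aeval_monomial]
  rw [Finsupp.prod_fintype _ _ (fun i => pow_zero _)]
  rw [Fin.prod_univ_succ]
  simp only [Fin.cons_zero, Finsupp.cons_zero, Finsupp.cons_succ, Fin.cons_succ, one_pow, one_mul]
  rw [monomial_eq, Finsupp.prod_fintype _ _ (fun i => pow_zero _)]
  rfl

lemma aeval_homog_field {F : Type*} [Field F] {n : ℕ} {d : ℕ} (g : MvPolynomial (Fin n) ℝ)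
    [Algebra ℝ F] (y : Fin (n + 1) → F) (hy0 : y 0 ≠ 0)
    (hd : ∀ μ ∈ g.support, (∑ i, μ i) ≤ d) :
    aeval y (homog d g) = y 0 ^ d * aeval (fun i => y i.succ * (y 0)⁻¹) g := by
  unfold homog
  rw [map_sum]
  conv_rhs => rw [← support_sum_monomial_coeff g, map_sum, Finset.mul_sum]
  apply Finset.sum_congr rfl
  intro μ hμ
  rw [aeval_monomial, aeval_monomial]
  rw [Finsupp.prod_fintype _ _ (fun i => pow_zero _),
    Finsupp.prod_fintype _ _ (fun i => pow_zero _)]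
  rw [Fin.prod_univ_succ]
  simp only [Finsupp.cons_zero, Finsupp.cons_succ, Fin.cons_zero, Fin.cons_succ]
  have hprod : (∏ i : Fin n, (y i.succ * (y 0)⁻¹) ^ μ i)
      = (∏ i : Fin n, y i.succ ^ μ i) * ((y 0)⁻¹) ^ (∑ i, μ i) := by
    rw [← Finset.prod_pow_eq_pow_sum, ← Finset.prod_mul_distrib]
    apply Finset.prod_congr rfl
    intro i _
    rw [mul_pow]
  rw [hprod]
  rw [pow_sub₀ _ hy0 (hd μ hμ)]
  field_simp
  rw [one_div, mul_right_comm _ (y 0 ^ _), mul_assoc (_ * _) (y 0 ^ _), ← mul_pow, mul_inv_cancel₀ hy0, one_pow, mul_one]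

end TropAux

/-! ### vanishing transfer -/

namespace TropAux

lemma vanish_I {n : ℕ} (I : Ideal (MvPolynomial (Fin n) ℂ))
    (S : Set (MvPolynomial (Fin n) ℝ))
    (hIS : I = Ideal.span (MvPolynomial.map (algebraMap ℝ ℂ) '' S))
    (z : Fin n → LaurentSeries ℝ)
    (hz : ∀ g : MvPolynomial (Fin n) ℝ,
      MvPolynomial.map (algebraMap ℝ ℂ) g ∈ I → aeval z g = 0) :
    ∀ f ∈ I, aeval (fun i => lmap (z i)) f = 0 := by
  intro f hf
  rw [hIS] at hf
  have hker : Ideal.span (MvPolynomial.map (algebraMap ℝ ℂ) '' S) ≤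
      RingHom.ker ((aeval (fun i => lmap (z i)) :
        MvPolynomial (Fin n) ℂ →ₐ[ℂ] LaurentSeries ℂ) : MvPolynomial (Fin n) ℂ →+* LaurentSeries ℂ) := by
    rw [Ideal.span_le]
    rintro _ ⟨s, hs, rfl⟩
    rw [SetLike.mem_coe, RingHom.mem_ker]
    have hmem : MvPolynomial.map (algebraMap ℝ ℂ) s ∈ I := by
      rw [hIS]
      exact Ideal.subset_span ⟨s, hs, rfl⟩
    have := hz s hmem
    show aeval (fun i => lmap (z i)) (MvPolynomial.map (algebraMap ℝ ℂ) s) = 0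
    rw [lmap_aeval, this, map_zero]
  have := hker hf
  rwa [RingHom.mem_ker] at this

/-- homogeneous scaling -/
lemma aeval_scale {m d : ℕ} {F : MvPolynomial (Fin m) ℂ} (hF : F.IsHomogeneous d)
    (c : LaurentSeries ℂ) (w : Fin m → LaurentSeries ℂ) :
    aeval (fun i => c * w i) F = c ^ d * aeval w F := by
  conv_lhs => rw [← support_sum_monomial_coeff F]
  conv_rhs => rw [← support_sum_monomial_coeff F]
  rw [map_sum, map_sum, Finset.mul_sum]
  apply Finset.sum_congr rfl
  intro μ hμ
  rw [aeval_monomial, aeval_monomial]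
  rw [Finsupp.prod_fintype _ _ (fun i => pow_zero _),
    Finsupp.prod_fintype _ _ (fun i => pow_zero _)]
  have hdeg : (∑ i, μ i) = d := by
    have hcoeff : coeff μ F ≠ 0 := by rwa [MvPolynomial.mem_support_iff] at hμ
    by_contra hne
    exact hcoeff (hF.coeff_eq_zero (by rwa [degree_eq_univ_sum μ]))
  have : (∏ i, (c * w i) ^ μ i) = c ^ d * ∏ i, w i ^ μ i := by
    rw [← hdeg, ← Finset.prod_pow_eq_pow_sum, ← Finset.prod_mul_distrib]
    apply Finset.prod_congr rfl
    intro i _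
    rw [mul_pow]
  rw [this]
  ring

/-- dehomogenization compatibility -/
lemma aeval_cons_comp {n : ℕ} (F : MvPolynomial (Fin (n + 1)) ℂ) (z : Fin n → LaurentSeries ℂ) :
    aeval (Fin.cons 1 z) F
      = aeval z (aeval (Fin.cons (1 : MvPolynomial (Fin n) ℂ) X) F) := by
  have k := ((aeval z : MvPolynomial (Fin n) ℂ →ₐ[ℂ] LaurentSeries ℂ) :
      MvPolynomial (Fin n) ℂ →+* LaurentSeries ℂ)
  rw [aeval_def (R := ℂ) (f := Fin.cons (1 : MvPolynomial (Fin n) ℂ) X)]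
  rw [show (aeval z (eval₂ (algebraMap ℂ (MvPolynomial (Fin n) ℂ))
      (Fin.cons (1 : MvPolynomial (Fin n) ℂ) X) F) : LaurentSeries ℂ)
    = ((aeval z : MvPolynomial (Fin n) ℂ →ₐ[ℂ] LaurentSeries ℂ) :
        MvPolynomial (Fin n) ℂ →+* LaurentSeries ℂ)
      (eval₂ (algebraMap ℂ (MvPolynomial (Fin n) ℂ))
        (Fin.cons (1 : MvPolynomial (Fin n) ℂ) X) F) from rfl]
  rw [eval₂_comp_left]
  rw [aeval_def]
  congr 1
  · ext c
    simp [MvPolynomial.algebraMap_eq]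
  · funext j
    refine Fin.cases ?_ ?_ j
    · simp [Fin.cons_zero]
    · intro i
      simp [Fin.cons_succ]

lemma order_div {F : Type*} [Field F] (x s : LaurentSeries F) (hx : x ≠ 0) (hs : s ≠ 0) :
    (x * s⁻¹).order = x.order - s.order := by
  have h1 : x * s⁻¹ ≠ 0 := mul_ne_zero hx (inv_ne_zero hs)
  have h2 := HahnSeries.order_mul h1 hs
  rw [mul_assoc, inv_mul_cancel₀ hs, mul_one] at h2
  omega

end TropAux


namespace TropAux

lemma sum_coeff {ι : Type*} (s : Finset ι) (f : ι → LaurentSeries ℝ) (k : ℤ) :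
    (∑ i ∈ s, f i).coeff k = ∑ i ∈ s, (f i).coeff k := by
  classical
  induction s using Finset.induction with
  | empty => simp
  | insert _ _ h ih => rw [Finset.sum_insert h, Finset.sum_insert h, HahnSeries.coeff_add, ih]

lemma sum_univ_le_totalDegree {n : ℕ} {R : Type*} [CommRing R] {g : MvPolynomial (Fin n) R}
    {μ : Fin n →₀ ℕ} (h : μ ∈ g.support) : ∑ i, μ i ≤ g.totalDegree := by
  have h2 := MvPolynomial.le_totalDegree h
  rwa [Finsupp.sum_fintype _ _ (fun i => rfl)] at h2

end TropAux

open TropAux HahnSeries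

/-- Real version of the patch equivalence: for a curve defined over `ℝ`, real vectors of
nonzero real Laurent series solving the real polynomials in `I` with negated valuation `u`
correspond to real Laurent-series solutions of the real polynomials of the affine patch
`Î = J + ⟨v·x − 1⟩` with nonnegative valuations and `u_i = val(y_0) − val(y_i)`. -/
theorem trop_patch_equiv_real {n : ℕ}
    (I : Ideal (MvPolynomial (Fin n) ℂ)) (hI : I.IsPrime)
    (hdim : ringKrullDim (MvPolynomial (Fin n) ℂ ⧸ I) = 1)
    (hreal : ∃ S : Set (MvPolynomial (Fin n) ℝ),
      I = Ideal.span (MvPolynomial.map (algebraMap ℝ ℂ) '' S))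
    (v : Fin (n + 1) → ℝ) (hv : ∀ i, v i ≠ 0)
    (hpatch : PatchCond (projClosureIdeal I) (fun i => (v i : ℂ)))
    (Ihat : Ideal (MvPolynomial (Fin (n + 1)) ℂ))
    (hIhat : Ihat = projClosureIdeal I ⊔
      Ideal.span {(∑ i, MvPolynomial.C ((v i : ℂ)) * X i) - 1})
    (u : Fin n → ℤ) (hu : u ≠ 0) :
    (∃ z : Fin n → LaurentSeries ℝ, (∀ i, z i ≠ 0) ∧
        (∀ g : MvPolynomial (Fin n) ℝ,
          MvPolynomial.map (algebraMap ℝ ℂ) g ∈ I → aeval z g = 0) ∧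
        ∀ i, -(z i).order = u i) ↔
    (∃ y : Fin (n + 1) → LaurentSeries ℝ, (∀ i, y i ≠ 0) ∧
        (∀ g : MvPolynomial (Fin (n + 1)) ℝ,
          MvPolynomial.map (algebraMap ℝ ℂ) g ∈ Ihat → aeval y g = 0) ∧
        (∀ i, 0 ≤ (y i).order) ∧
        ∀ i : Fin n, u i = (y 0).order - (y i.succ).order) := by
  obtain ⟨S, hIS⟩ := hreal
  constructor
  · -- forward direction
    rintro ⟨z, hz0, hzI, hzu⟩
    set w : Fin (n + 1) → LaurentSeries ℝ := Fin.cons 1 z with hw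
    have hw0 : ∀ i, w i ≠ 0 := by
      intro i
      refine Fin.cases ?_ ?_ i
      · rw [hw, Fin.cons_zero]; exact one_ne_zero
      · intro j; rw [hw, Fin.cons_succ]; exact hz0 j
    have hwz : ∀ i : Fin n, w i.succ = z i := fun i => by rw [hw, Fin.cons_succ]
    have hw1 : w 0 = 1 := by rw [hw, Fin.cons_zero]
    set m : ℤ := Finset.univ.inf' Finset.univ_nonempty (fun i => (w i).order) with hm
    have hm_le : ∀ i, m ≤ (w i).order := fun i => Finset.inf'_le _ (Finset.mem_univ i)
    obtain ⟨i0, -, hi0⟩ := Finset.exists_mem_eq_inf' (Finset.univ_nonempty)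
      (fun i : Fin (n + 1) => (w i).order)
    rw [← hm] at hi0
    have hw00 : (w 0).order = 0 := by rw [hw1, HahnSeries.order_one]
    have hm0 : m ≤ 0 := hw00 ▸ hm_le 0
    -- the scaled series
    set W : Fin (n + 1) → LaurentSeries ℂ :=
      fun i => lmap (HahnSeries.single (-m) 1 * w i) with hW
    have hordw : ∀ i, (HahnSeries.single (-m) (1 : ℝ) * w i).order = -m + (w i).order :=
      fun i => by
        rw [HahnSeries.order_mul (HahnSeries.single_ne_zero one_ne_zero) (hw0 i),
          HahnSeries.order_single one_ne_zero]
    have horderW : ∀ i, ∀ k : ℤ, k < 0 → (W i).coeff k = 0 := by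
      intro i k hk
      rw [hW]
      simp only [lmap_coeff]
      rw [HahnSeries.coeff_eq_zero_of_lt_order, map_zero]
      rw [hordw i]
      have := hm_le i
      omega
    set a : Fin (n + 1) → ℂ := fun i => (W i).coeff 0 with ha
    have ha_eq : ∀ i, a i = algebraMap ℝ ℂ ((w i).coeff m) := by
      intro i
      have h := HahnSeries.coeff_single_mul_add (r := (1:ℝ)) (x := w i) (a := m) (b := -m)
      rw [add_neg_cancel, one_mul] at h
      show (W i).coeff 0 = _
      simp only [hW, lmap_coeff]
      rw [h]
    have hwFv : ∀ F : MvPolynomial (Fin (n + 1)) ℂ,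
        aeval (Fin.cons (1 : MvPolynomial (Fin n) ℂ) X) F ∈ I →
        aeval (fun i => lmap (w i)) F = 0 := by
      intro F hF
      have hcons : (fun i => lmap (w i))
          = Fin.cons (1 : LaurentSeries ℂ) (fun i => lmap (z i)) := by
        funext j
        refine Fin.cases ?_ ?_ j
        · rw [hw1, Fin.cons_zero, map_one]
        · intro i; rw [hwz i, Fin.cons_succ]
      rw [hcons, aeval_cons_comp]
      exact vanish_I I S hIS z hzI _ hF
    have hJW : ∀ g ∈ projClosureIdeal I, aeval W g = 0 := by
      intro g hg
      have hker : projClosureIdeal I ≤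
          RingHom.ker ((aeval W : MvPolynomial (Fin (n + 1)) ℂ →ₐ[ℂ] LaurentSeries ℂ) :
            MvPolynomial (Fin (n + 1)) ℂ →+* LaurentSeries ℂ) := by
        rw [projClosureIdeal, Ideal.span_le]
        rintro F ⟨⟨d, hFh⟩, hFd⟩
        rw [SetLike.mem_coe, RingHom.mem_ker]
        have hWsc : W = fun i => (HahnSeries.single (-m) (1 : ℂ)) * lmap (w i) := by
          funext i
          rw [hW]
          show lmap (HahnSeries.single (-m) 1 * w i) = _
          rw [map_mul, lmap_single, map_one]
        show aeval W F = 0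
        rw [hWsc, aeval_scale hFh, hwFv F hFd, mul_zero]
      have := hker hg
      rwa [RingHom.mem_ker] at this
    have heval_a : ∀ g ∈ projClosureIdeal I, eval a g = 0 := by
      intro g hg
      have h2 := (aeval_coeff W horderW g).2
      rw [hJW g hg] at h2
      rw [← h2]
      simp
    have ha_ne : a ≠ 0 := by
      intro hcontr
      have h1 : a i0 = 0 := by rw [hcontr]; rfl
      rw [ha_eq i0] at h1
      have h2 : (w i0).coeff m = 0 :=
        (algebraMap ℝ ℂ).injective (h1.trans (map_zero (algebraMap ℝ ℂ)).symm)
      rw [hi0] at h2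
      exact hw0 i0 (HahnSeries.coeff_order_eq_zero.mp h2)
    have ha_zero : ∃ j, a j = 0 := by
      obtain ⟨i, hui⟩ := Function.ne_iff.mp hu
      have hzo : (z i).order = -u i := by have := hzu i; omega
      by_cases hmz : m = 0
      · refine ⟨i.succ, ?_⟩
        rw [ha_eq]
        have hzpos : 0 < (z i).order := by
          have h1 : m ≤ (w i.succ).order := hm_le i.succ
          rw [hwz i] at h1
          have : u i ≠ 0 := by simpa using hui
          omega
        rw [hwz i, HahnSeries.coeff_eq_zero_of_lt_order (by omega), map_zero]
      · refine ⟨0, ?_⟩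
        rw [ha_eq]
        have hmlt : m < 0 := lt_of_le_of_ne hm0 hmz
        rw [HahnSeries.coeff_eq_zero_of_lt_order (by rw [hw00]; omega), map_zero]
    have hsum := hpatch a ha_ne heval_a ha_zero
    -- the linear combination
    set s : LaurentSeries ℝ := ∑ i, algebraMap ℝ (LaurentSeries ℝ) (v i) * w i with hs
    have hscoeff : ∀ k : ℤ, s.coeff k = ∑ i, v i * (w i).coeff k := by
      intro k
      rw [hs, sum_coeff]
      apply Finset.sum_congr rfl
      intro i _
      rw [algLS, HahnSeries.C_apply, HahnSeries.coeff_single_zero_mul]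
    have hsum' : algebraMap ℝ ℂ (s.coeff m) = ∑ i, (v i : ℂ) * a i := by
      rw [hscoeff, map_sum]
      apply Finset.sum_congr rfl
      intro i _
      rw [map_mul, ha_eq i]
      rfl
    have hscm : s.coeff m ≠ 0 := by
      intro h
      rw [h, map_zero] at hsum'
      exact hsum hsum'.symm
    have hs0 : s ≠ 0 := fun h => hscm (by rw [h]; rfl)
    have hords_le : s.order ≤ m := HahnSeries.order_le_of_coeff_ne_zero hscm
    have hords : s.order = m := by
      refine le_antisymm hords_le ?_
      by_contra hcon
      push_neg at hcon
      have hoc : s.coeff s.order = 0 := by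
        rw [hscoeff]
        apply Finset.sum_eq_zero
        intro i _
        rw [HahnSeries.coeff_eq_zero_of_lt_order (lt_of_lt_of_le hcon (hm_le i)), mul_zero]
      exact hs0 (HahnSeries.coeff_order_eq_zero.mp hoc)
    refine ⟨fun i => w i * s⁻¹, fun i => mul_ne_zero (hw0 i) (inv_ne_zero hs0), ?_, ?_, ?_⟩
    · -- equations
      intro g hg
      apply lmap_injective
      rw [map_zero, ← lmap_aeval]
      have hker : Ihat ≤
          RingHom.ker ((aeval (fun i => lmap (w i * s⁻¹)) :
              MvPolynomial (Fin (n + 1)) ℂ →ₐ[ℂ] LaurentSeries ℂ) :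
            MvPolynomial (Fin (n + 1)) ℂ →+* LaurentSeries ℂ) := by
        rw [hIhat]
        apply sup_le
        · rw [projClosureIdeal, Ideal.span_le]
          rintro F ⟨⟨d, hFh⟩, hFd⟩
          rw [SetLike.mem_coe, RingHom.mem_ker]
          show aeval (fun i => lmap (w i * s⁻¹)) F = 0
          have hWsc : (fun i => lmap (w i * s⁻¹))
              = fun i => (lmap s)⁻¹ * lmap (w i) := by
            funext i
            rw [map_mul, map_inv₀, mul_comm]
          rw [hWsc, aeval_scale hFh, hwFv F hFd, mul_zero]
        · rw [Ideal.span_le, Set.singleton_subset_iff, SetLike.mem_coe, RingHom.mem_ker]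
          show aeval (fun i => lmap (w i * s⁻¹))
            ((∑ i, MvPolynomial.C ((v i : ℂ)) * X i) - 1) = 0
          rw [map_sub, map_sum, map_one]
          simp only [map_mul, aeval_C, aeval_X]
          have hterm : ∀ i : Fin (n + 1),
              algebraMap ℂ (LaurentSeries ℂ) ((v i : ℂ)) * (lmap (w i) * lmap s⁻¹)
                = lmap (algebraMap ℝ (LaurentSeries ℝ) (v i) * (w i * s⁻¹)) := by
            intro i
            rw [show lmap (algebraMap ℝ (LaurentSeries ℝ) (v i) * (w i * s⁻¹))
                = lmap (algebraMap ℝ (LaurentSeries ℝ) (v i)) * (lmap (w i) * lmap s⁻¹) from by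
              rw [map_mul, map_mul], lmap_algebraMap]
            rfl
          rw [Finset.sum_congr rfl (fun i _ => hterm i), ← map_sum]
          have : (∑ i, algebraMap ℝ (LaurentSeries ℝ) (v i) * (w i * s⁻¹)) = 1 := by
            have : (∑ i, algebraMap ℝ (LaurentSeries ℝ) (v i) * (w i * s⁻¹)) = s * s⁻¹ := by
              rw [hs, Finset.sum_mul]
              apply Finset.sum_congr rfl
              intro i _
              rw [mul_assoc]
            rw [this, mul_inv_cancel₀ hs0]
          rw [this, map_one, sub_self]
      have := hker hg
      rwa [RingHom.mem_ker] at this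
    · -- nonnegative orders
      intro i
      rw [order_div _ _ (hw0 i) hs0, hords]
      have := hm_le i
      omega
    · -- valuation differences
      intro i
      rw [order_div _ _ (hw0 0) hs0, order_div _ _ (hw0 i.succ) hs0, hords, hw00, hwz i]
      have := hzu i
      omega
  · -- backward direction
    rintro ⟨y, hy0, hyI, -, hyu⟩
    refine ⟨fun i => y i.succ * (y 0)⁻¹,
      fun i => mul_ne_zero (hy0 i.succ) (inv_ne_zero (hy0 0)), ?_, ?_⟩
    · intro g hg
      set d := g.totalDegree with hd
      have hsup : ∀ μ ∈ g.support, (∑ i, μ i) ≤ d := fun μ hμ => sum_univ_le_totalDegree hμ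
      have hmapH : MvPolynomial.map (algebraMap ℝ ℂ) (homog d g)
          = homog d (MvPolynomial.map (algebraMap ℝ ℂ) g) :=
        map_homog _ (algebraMap ℝ ℂ).injective d g
      have hmem : MvPolynomial.map (algebraMap ℝ ℂ) (homog d g) ∈ projClosureIdeal I := by
        apply Ideal.subset_span
        constructor
        · refine ⟨d, ?_⟩
          rw [hmapH]
          apply homog_isHomogeneous
          intro μ hμ
          exact hsup μ (MvPolynomial.support_map_subset _ _ hμ)
        · rw [hmapH, aeval_cons_one_homog]
          exact hg
      have hIm : MvPolynomial.map (algebraMap ℝ ℂ) (homog d g) ∈ Ihat := by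
        rw [hIhat]; exact Ideal.mem_sup_left hmem
      have h0 := hyI (homog d g) hIm
      rw [aeval_homog_field g y (hy0 0) hsup] at h0
      rcases mul_eq_zero.mp h0 with h | h
      · exact absurd h (pow_ne_zero d (hy0 0))
      · exact h
    · intro i
      rw [order_div _ _ (hy0 i.succ) (hy0 0)]
      have := hyu i
      omega

end
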